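/- Let U be a precise point sequence and W a sequence of closed balls in ℝ^d. The supremum over realizations B of W of the one-sided shortcut discrete Fréchet distance F_c(U,B) is at most δ if and only if the greedy procedure succeeds, i.e., there exist indices j*(1) ≤ … ≤ j*(n) with w_{j*(i)} ⊆ D(u_i, δ) for all i, where each j*(i) is chosen greedily minimal. -/

import Mathlib

open Metric

noncomputable section

/-- Points in `ℝ^k`. -/
abbrev Pt (k : ℕ) := EuclideanSpace ℝ (Fin k)

/-- One step in the discrete Fréchet coupling: advance in `A`, in `B`, or both. -/
def dfStep {n m : ℕ} (p q : Fin (n+1) × Fin (m+1)) : Prop :=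
  ((q.1 : ℕ) = (p.1 : ℕ) + 1 ∧ q.2 = p.2) ∨
  (q.1 = p.1 ∧ (q.2 : ℕ) = (p.2 : ℕ) + 1) ∨
  ((q.1 : ℕ) = (p.1 : ℕ) + 1 ∧ (q.2 : ℕ) = (p.2 : ℕ) + 1)

/-- `(a_n, b_m)` is reachable from `(a_1, b_1)` in the graph `G_δ`. -/
def dfReach {k n m : ℕ} (a : Fin (n+1) → Pt k) (b : Fin (m+1) → Pt k) (δ : ℝ) : Prop :=
  dist (a 0) (b 0) ≤ δ ∧ dist (a (Fin.last n)) (b (Fin.last m)) ≤ δ ∧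
  Relation.ReflTransGen
    (fun p q => dfStep p q ∧ dist (a p.1) (b p.2) ≤ δ ∧ dist (a q.1) (b q.2) ≤ δ)
    (0, 0) (Fin.last n, Fin.last m)

/-- The discrete Fréchet distance. -/
def dF {k n m : ℕ} (a : Fin (n+1) → Pt k) (b : Fin (m+1) → Pt k) : ℝ :=
  sInf {δ : ℝ | 0 < δ ∧ dfReach a b δ}

/-- One-sided discrete Fréchet distance with shortcuts on side `B`:
the minimum of `dF A B'` over nonempty subsequences `B'` of `B`. -/
def Fc {k n m : ℕ} (a : Fin (n+1) → Pt k) (b : Fin (m+1) → Pt k) : ℝ :=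
  sInf {v : ℝ | ∃ (l : ℕ) (f : Fin (l+1) → Fin (m+1)), StrictMono f ∧ v = dF a (b ∘ f)}

section Helpers

variable {k n m : ℕ}

private lemma dF_nonneg (a : Fin (n+1) → Pt k) (b : Fin (m+1) → Pt k) : 0 ≤ dF a b :=
  Real.sInf_nonneg fun _ hx => hx.1.le

/-- a straight path: every dfStep edge is in R -/
private lemma rtg_straight (R : Fin (n+1) × Fin (m+1) → Fin (n+1) × Fin (m+1) → Prop)
    (hR : ∀ p q, dfStep p q → R p q) :
    Relation.ReflTransGen R (0, 0) (Fin.last n, Fin.last m) := by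
  have h1 : ∀ i : ℕ, ∀ hi : i ≤ n, Relation.ReflTransGen R (0, 0) (⟨i, by omega⟩, 0) := by
    intro i hi
    induction i with
    | zero =>
        have : ((⟨0, by omega⟩ : Fin (n+1)), (0 : Fin (m+1))) = ((0, 0) : Fin (n+1) × Fin (m+1)) := by
          simp [Prod.ext_iff, Fin.ext_iff]
        rw [this]
    | succ i ih =>
        exact (ih (by omega)).tail (hR _ _ (Or.inl ⟨rfl, rfl⟩))
  have h2 : ∀ t : ℕ, ∀ ht : t ≤ m, Relation.ReflTransGen R (0, 0) (Fin.last n, ⟨t, by omega⟩) := by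
    intro t ht
    induction t with
    | zero =>
        have h0 := h1 n le_rfl
        have : ((⟨n, by omega⟩ : Fin (n+1)), (0 : Fin (m+1)))
            = ((Fin.last n, ⟨0, by omega⟩) : Fin (n+1) × Fin (m+1)) := by
          simp [Prod.ext_iff, Fin.ext_iff, Fin.last]
        rwa [this] at h0
    | succ t ih =>
        exact (ih (by omega)).tail (hR _ _ (Or.inr (Or.inl ⟨rfl, rfl⟩)))
  have := h2 m le_rfl
  have he : ((Fin.last n, ⟨m, by omega⟩) : Fin (n+1) × Fin (m+1)) = (Fin.last n, Fin.last m) := by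
    simp [Prod.ext_iff, Fin.ext_iff, Fin.last]
  rwa [he] at this

set_option maxHeartbeats 1000000 in
private lemma reach_exists (a : Fin (n+1) → Pt k) (b : Fin (m+1) → Pt k) :
    ∃ δ0 : ℝ, 0 < δ0 ∧ dfReach a b δ0 := by
  obtain ⟨δ0, hpos, hall⟩ : ∃ δ0 : ℝ, 0 < δ0 ∧
      ∀ p : Fin (n+1) × Fin (m+1), dist (a p.1) (b p.2) ≤ δ0 := by
    refine ⟨1 + Finset.univ.sup' Finset.univ_nonempty
      (fun p : Fin (n+1) × Fin (m+1) => dist (a p.1) (b p.2)), ?_, ?_⟩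
    · have h1 := Finset.le_sup' (fun p : Fin (n+1) × Fin (m+1) => dist (a p.1) (b p.2))
        (Finset.mem_univ ((0, 0) : Fin (n+1) × Fin (m+1)))
      have h2 : (0:ℝ) ≤ dist (a 0) (b 0) := dist_nonneg
      simp only at h1
      linarith
    · intro p
      have h1 := Finset.le_sup' (fun p : Fin (n+1) × Fin (m+1) => dist (a p.1) (b p.2))
        (Finset.mem_univ p)
      linarith
  refine ⟨δ0, hpos, hall (0,0), hall (Fin.last n, Fin.last m), ?_⟩
  exact rtg_straight (fun p q => dfStep p q ∧ dist (a p.1) (b p.2) ≤ δ0 ∧ dist (a q.1) (b q.2) ≤ δ0)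
    (fun p q hs => ⟨hs, hall p, hall q⟩)

private lemma matching_of_reach {a : Fin (n+1) → Pt k} {b : Fin (m+1) → Pt k} {δ : ℝ}
    (h : dfReach a b δ) :
    ∃ M : Fin (n+1) → Fin (m+1), Monotone M ∧ ∀ i, dist (a i) (b (M i)) ≤ δ := by
  obtain ⟨h0, -, hpath⟩ := h
  suffices H : ∀ q, Relation.ReflTransGen
      (fun p q => dfStep p q ∧ dist (a p.1) (b p.2) ≤ δ ∧ dist (a q.1) (b q.2) ≤ δ) (0, 0) q →
      ∃ M : Fin (n+1) → Fin (m+1), Monotone M ∧ M q.1 ≤ q.2 ∧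
        ∀ i, i ≤ q.1 → dist (a i) (b (M i)) ≤ δ by
    obtain ⟨M, h1, _, h3⟩ := H _ hpath
    exact ⟨M, h1, fun i => h3 i (Fin.le_last i)⟩
  intro q hq
  induction hq with
  | refl =>
      refine ⟨fun _ => 0, monotone_const, le_refl _, fun i hi => ?_⟩
      have : i = 0 := le_antisymm hi (Fin.zero_le _)
      rw [this]; exact h0
  | @tail p q hp hpq ih =>
      obtain ⟨M, hM, hMp, hMd⟩ := ih
      obtain ⟨hstep, hdp, hdq⟩ := hpq
      have hp2q2 : p.2 ≤ q.2 := by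
        rcases hstep with ⟨-, h⟩ | ⟨-, h⟩ | ⟨-, h⟩
        · exact le_of_eq h.symm
        · rw [Fin.le_def]; omega
        · rw [Fin.le_def]; omega
      refine ⟨fun i => if i ≤ p.1 then M i else q.2, ?_, ?_, ?_⟩
      · intro i i' hii'
        by_cases hi : i ≤ p.1 <;> by_cases hi' : i' ≤ p.1 <;> simp only [hi, hi', if_pos, if_neg, if_true, if_false]
        · exact hM hii'
        · exact le_trans (le_trans (hM hi) hMp) hp2q2
        · exact absurd (le_trans hii' hi') hi
        · exact le_refl _
      · by_cases hq1 : q.1 ≤ p.1 <;> simp only [hq1, if_pos, if_neg, if_true, if_false]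
        · exact le_trans (le_trans (hM hq1) hMp) hp2q2
        · exact le_refl _
      · intro i hi
        by_cases hip : i ≤ p.1
        · simpa only [hip, if_true] using hMd i hip
        · have hq1 : (q.1 : ℕ) = (p.1 : ℕ) + 1 := by
            rcases hstep with ⟨h, -⟩ | ⟨h, -⟩ | ⟨h, -⟩
            · exact h
            · exact absurd (hi.trans (le_of_eq h)) hip
            · exact h
          have hiq : i = q.1 := by
            rw [Fin.le_def] at hi
            rw [Fin.le_def, not_le] at hip
            exact Fin.ext (by omega)
          simp only [hip, if_false]
          rw [hiq]
          exact hdq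



private lemma rtg_staircase (R : Fin (n+1) × Fin (m+1) → Fin (n+1) × Fin (m+1) → Prop)
    (g : Fin (n+1) → Fin (m+1)) (hg : Monotone g) (hg0 : g 0 = 0)
    (hglast : g (Fin.last n) = Fin.last m)
    (hstep : ∀ i : Fin n, (g i.succ : ℕ) ≤ (g i.castSucc : ℕ) + 1)
    (hR : ∀ p q, dfStep p q → p.2 = g p.1 → q.2 = g q.1 → R p q) :
    Relation.ReflTransGen R (0, 0) (Fin.last n, Fin.last m) := by
  have h1 : ∀ p : Fin (n+1), Relation.ReflTransGen R (0, 0) (p, g p) := by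
    intro p
    induction p using Fin.induction with
    | zero => rw [hg0]
    | succ i ih =>
        refine ih.tail (hR (i.castSucc, g i.castSucc) (i.succ, g i.succ) ?_ rfl rfl)
        have hle : (g i.castSucc : ℕ) ≤ (g i.succ : ℕ) := hg (Fin.castSucc_le_succ i)
        rcases eq_or_lt_of_le hle with h | h
        · exact Or.inl ⟨by simp, Fin.ext h.symm⟩
        · refine Or.inr (Or.inr ⟨by simp, ?_⟩)
          show (g i.succ : ℕ) = (g i.castSucc : ℕ) + 1
          have := hstep i
          omega
  have := h1 (Fin.last n)
  rwa [hglast] at this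

private lemma Fc_le_of_monotone {u : Fin (n+1) → Pt k} {b : Fin (m+1) → Pt k}
    {δ : ℝ} (hδ : 0 < δ) (j : Fin (n+1) → Fin (m+1)) (hj : Monotone j)
    (hd : ∀ i, dist (u i) (b (j i)) ≤ δ) : Fc u b ≤ δ := by
  classical
  set s : Finset (Fin (m+1)) := Finset.univ.image j with hs
  have hsne : s.Nonempty := ⟨j 0, Finset.mem_image_of_mem _ (Finset.mem_univ _)⟩
  have hcard : s.card = (s.card - 1) + 1 := (Nat.succ_pred_eq_of_pos hsne.card_pos).symm
  set l := s.card - 1 with hl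
  let f : Fin (l+1) ↪o Fin (m+1) := s.orderEmbOfFin hcard
  have hrange : ∀ t, (f t) ∈ s := fun t => Finset.orderEmbOfFin_mem s hcard t
  have hmem : ∀ i, ∃ t, f t = j i := by
    intro i
    have h1 : j i ∈ s := Finset.mem_image_of_mem _ (Finset.mem_univ _)
    have h2 := Finset.range_orderEmbOfFin s hcard
    have h3 : (j i : Fin (m+1)) ∈ Set.range (f : Fin (l+1) → Fin (m+1)) := by
      rw [h2]; exact Finset.mem_coe.mpr h1
    exact h3
  choose g hg using hmem
  have hgmono : Monotone g := by
    intro x y hxy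
    have : f (g x) ≤ f (g y) := by rw [hg, hg]; exact hj hxy
    exact f.le_iff_le.mp this
  have hg0 : g 0 = 0 := by
    have h1 : f (g 0) ≤ f 0 := by
      rw [hg]
      obtain ⟨i0, -, hi0⟩ := Finset.mem_image.mp (hrange 0)
      rw [← hi0]; exact hj (Fin.zero_le _)
    exact le_antisymm (f.le_iff_le.mp h1) (Fin.zero_le _)
  have hglast : g (Fin.last n) = Fin.last l := by
    have h1 : f (Fin.last l) ≤ f (g (Fin.last n)) := by
      rw [hg]
      obtain ⟨i1, -, hi1⟩ := Finset.mem_image.mp (hrange (Fin.last l))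
      rw [← hi1]; exact hj (Fin.le_last _)
    exact le_antisymm (Fin.le_last _) (f.le_iff_le.mp h1)
  have hstep : ∀ i : Fin n, (g i.succ : ℕ) ≤ (g i.castSucc : ℕ) + 1 := by
    intro i
    by_contra hcon
    push_neg at hcon
    have hlt' : ((g i.castSucc : Fin (l+1)) : ℕ) + 1 < l + 1 := by
      have := (g i.succ).isLt
      omega
    set t : Fin (l+1) := ⟨(g i.castSucc : ℕ) + 1, hlt'⟩ with ht
    obtain ⟨i2, -, hi2⟩ := Finset.mem_image.mp (hrange t)
    have hlt1 : j i.castSucc < j i2 := by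
      rw [← hg i.castSucc, hi2]
      exact f.strictMono (by rw [Fin.lt_def]; simp [ht])
    have hlt2 : j i2 < j i.succ := by
      rw [hi2, ← hg i.succ]
      refine f.strictMono ?_
      rw [Fin.lt_def]
      show (g i.castSucc : ℕ) + 1 < (g i.succ : ℕ)
      exact hcon
    rcases le_or_gt i2 i.castSucc with h | h
    · exact absurd (hj h) (not_le.mpr hlt1)
    · have h2 : i.succ ≤ i2 := by
        rw [Fin.le_def, Fin.val_succ]
        rw [Fin.lt_def, Fin.coe_castSucc] at h
        omega
      exact absurd (hj h2) (not_le.mpr hlt2)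
  have hdist : ∀ i : Fin (n+1), dist (u i) ((b ∘ (f : Fin (l+1) → Fin (m+1))) (g i)) ≤ δ := by
    intro i
    have : (b ∘ (f : Fin (l+1) → Fin (m+1))) (g i) = b (j i) := by
      simp only [Function.comp_apply, hg]
    rw [this]; exact hd i
  have hreach : dfReach u (b ∘ (f : Fin (l+1) → Fin (m+1))) δ := by
    refine ⟨?_, ?_, ?_⟩
    · have := hdist 0; rwa [hg0] at this
    · have := hdist (Fin.last n); rwa [hglast] at this
    · refine rtg_staircase _ g hgmono hg0 hglast hstep ?_
      intro p q hstep' hp2 hq2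
      refine ⟨hstep', ?_, ?_⟩
      · rw [hp2]; exact hdist p.1
      · rw [hq2]; exact hdist q.1
  have hdF : dF u (b ∘ (f : Fin (l+1) → Fin (m+1))) ≤ δ :=
    csInf_le ⟨0, fun x hx => hx.1.le⟩ ⟨hδ, hreach⟩
  have hFc : Fc u b ≤ dF u (b ∘ (f : Fin (l+1) → Fin (m+1))) := by
    refine csInf_le ⟨0, ?_⟩ ⟨l, (f : Fin (l+1) → Fin (m+1)), f.strictMono, rfl⟩
    rintro v ⟨l', f', hf', rfl⟩
    exact dF_nonneg _ _
  exact le_trans hFc hdF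

private lemma exists_matching {u : Fin (n+1) → Pt k} {b : Fin (m+1) → Pt k} {δ ε : ℝ}
    (h : Fc u b ≤ δ) (hε : δ < ε) :
    ∃ M : Fin (n+1) → Fin (m+1), Monotone M ∧ ∀ i, dist (u i) (b (M i)) < ε := by
  have hVne : {v : ℝ | ∃ (l : ℕ) (f : Fin (l+1) → Fin (m+1)),
      StrictMono f ∧ v = dF u (b ∘ f)}.Nonempty :=
    ⟨dF u b, m, id, strictMono_id, by simp⟩
  unfold Fc at h
  obtain ⟨v, hv, hvlt⟩ := exists_lt_of_csInf_lt hVne (lt_of_le_of_lt h hε)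
  obtain ⟨l, f, hf, rfl⟩ := hv
  obtain ⟨δ0, hδ0, hre0⟩ := reach_exists u (b ∘ f)
  have hSne : {δ' : ℝ | 0 < δ' ∧ dfReach u (b ∘ f) δ'}.Nonempty := ⟨δ0, hδ0, hre0⟩
  unfold dF at hvlt
  obtain ⟨δ'', hδ'', hlt⟩ := exists_lt_of_csInf_lt hSne hvlt
  obtain ⟨M', hM', hMd⟩ := matching_of_reach hδ''.2
  exact ⟨f ∘ M', hf.monotone.comp hM', fun i => lt_of_le_of_lt (hMd i) hlt⟩

end Helpers

private lemma adversary {d n m : ℕ} {u : Fin (n+1) → Pt d} {c : Fin (m+1) → Pt d}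
    {r : Fin (m+1) → ℝ} {δ : ℝ}
    (H : ∀ b : Fin (m+1) → Pt d, (∀ x, b x ∈ closedBall (c x) (r x)) → Fc u b ≤ δ)
    (W : Fin (m+1) → Fin (n+1))
    (hW : ∀ x, ¬ closedBall (c x) (r x) ⊆ closedBall (u (W x)) δ)
    (hroute : ∀ M : Fin (n+1) → Fin (m+1), Monotone M → ∃ i, W (M i) = i) : False := by
  have hpt : ∀ x, ∃ p, p ∈ closedBall (c x) (r x) ∧ δ < dist (u (W x)) p := by
    intro x
    obtain ⟨p, hp1, hp2⟩ := Set.not_subset.mp (hW x)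
    refine ⟨p, hp1, ?_⟩
    rw [mem_closedBall, not_le] at hp2
    rwa [dist_comm]
  choose b hb1 hb2 using hpt
  have hδE : δ < Finset.univ.inf' Finset.univ_nonempty (fun x => dist (u (W x)) (b x)) := by
    rw [Finset.lt_inf'_iff]
    exact fun x _ => hb2 x
  obtain ⟨M, hM, hMd⟩ := exists_matching (H b hb1) hδE
  obtain ⟨i, hi⟩ := hroute M hM
  have h1 := hMd i
  have h2 : Finset.univ.inf' Finset.univ_nonempty (fun x => dist (u (W x)) (b x))
      ≤ dist (u (W (M i))) (b (M i)) := Finset.inf'_le _ (Finset.mem_univ _)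
  rw [hi] at h2
  linarith

/-- Lemma 4 of the paper: the supremum over realizations `B` of `W` of the
one-sided shortcut discrete Fréchet distance `F_c(U,B)` is at most `δ` (equivalently,
`F_c(U,B) ≤ δ` for every realization `B`) iff the greedy procedure succeeds, i.e. there is
a monotone choice of indices `j*` with `w_{j*(i)} ⊆ D(u_i,δ)` for all `i`. -/
theorem Fmax_le_iff_greedy_succeeds {d n m : ℕ}
    (u : Fin (n+1) → Pt d) (c : Fin (m+1) → Pt d) (r : Fin (m+1) → ℝ)
    (hr : ∀ x, 0 ≤ r x) (δ : ℝ) (hδ : 0 < δ) :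
    (∀ b : Fin (m+1) → Pt d, (∀ x, b x ∈ closedBall (c x) (r x)) → Fc u b ≤ δ) ↔
    (∃ j : Fin (n+1) → Fin (m+1), Monotone j ∧
      ∀ i, closedBall (c (j i)) (r (j i)) ⊆ closedBall (u i) δ) := by
    classical
  constructor
  · -- forward: greedy construction
    intro H
    have key : ∀ i : ℕ, i ≤ n → ∃ j : Fin (n+1) → Fin (m+1), Monotone j ∧
        (∀ s : Fin (n+1), (s : ℕ) ≤ i → closedBall (c (j s)) (r (j s)) ⊆ closedBall (u s) δ) ∧
        (∀ s : Fin (n+1), (s : ℕ) ≤ i → ∀ x, x < j s →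
          (∀ s' : Fin (n+1), s' < s → j s' ≤ x) →
          ¬ closedBall (c x) (r x) ⊆ closedBall (u s) δ) := by
      intro i
      induction i with
      | zero =>
        intro _
        have hT : (Finset.univ.filter fun x : Fin (m+1) =>
            closedBall (c x) (r x) ⊆ closedBall (u 0) δ).Nonempty := by
          by_contra hemp
          rw [Finset.not_nonempty_iff_eq_empty] at hemp
          refine adversary H (fun _ => 0) (fun x => ?_) (fun M hM => ⟨0, rfl⟩)
          intro hx
          have hmem : x ∈ Finset.univ.filter (fun x : Fin (m+1) =>
              closedBall (c x) (r x) ⊆ closedBall (u 0) δ) := by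
            rw [Finset.mem_filter]; exact ⟨Finset.mem_univ _, hx⟩
          rw [hemp] at hmem
          exact absurd hmem (Finset.notMem_empty x)
        have hymem := Finset.min'_mem _ hT
        rw [Finset.mem_filter] at hymem
        refine ⟨fun _ => Finset.min' _ hT, monotone_const, ?_, ?_⟩
        · intro s hs
          have hs0 : s = 0 := by
            rw [Fin.ext_iff, Fin.val_zero]; omega
          rw [hs0]
          exact hymem.2
        · intro s hs x hx _
          have hs0 : s = 0 := by
            rw [Fin.ext_iff, Fin.val_zero]; omega
          rw [hs0]
          intro hGood
          have hle : Finset.min' _ hT ≤ x := by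
            refine Finset.min'_le _ x ?_
            rw [Finset.mem_filter]; exact ⟨Finset.mem_univ _, hGood⟩
          exact absurd hx (not_lt.mpr hle)
      | succ i ih =>
        intro hin
        obtain ⟨j, hjmono, hjgood, hjmin⟩ := ih (by omega)
        have hiF : i < n + 1 := by omega
        have hiF1 : i + 1 < n + 1 := by omega
        have hT : (Finset.univ.filter fun x : Fin (m+1) =>
            j ⟨i, hiF⟩ ≤ x ∧
            closedBall (c x) (r x) ⊆ closedBall (u ⟨i+1, hiF1⟩) δ).Nonempty := by
          by_contra hemp
          rw [Finset.not_nonempty_iff_eq_empty] at hemp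
          have hnotT : ∀ x : Fin (m+1), ¬ (j ⟨i, hiF⟩ ≤ x ∧
              closedBall (c x) (r x) ⊆ closedBall (u ⟨i+1, hiF1⟩) δ) := by
            intro x hx
            have hmem : x ∈ Finset.univ.filter (fun x : Fin (m+1) =>
                j ⟨i, hiF⟩ ≤ x ∧
                closedBall (c x) (r x) ⊆ closedBall (u ⟨i+1, hiF1⟩) δ) := by
              rw [Finset.mem_filter]; exact ⟨Finset.mem_univ _, hx⟩
            rw [hemp] at hmem
            exact absurd hmem (Finset.notMem_empty x)
          refine adversary H (fun x =>
            if h : (Finset.univ.filter fun s : Fin (n+1) => (s : ℕ) ≤ i ∧ x < j s).Nonempty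
            then Finset.min' _ h else ⟨i+1, hiF1⟩) ?_ ?_
          · intro x
            by_cases h : (Finset.univ.filter fun s : Fin (n+1) => (s : ℕ) ≤ i ∧ x < j s).Nonempty
            · rw [dif_pos h]
              have hsmem := Finset.min'_mem _ h
              rw [Finset.mem_filter] at hsmem
              refine hjmin _ hsmem.2.1 x hsmem.2.2 ?_
              intro s' hs'
              by_contra hxs'
              push_neg at hxs'
              have hs'mem : s' ∈ Finset.univ.filter
                  (fun s : Fin (n+1) => (s : ℕ) ≤ i ∧ x < j s) := by
                rw [Finset.mem_filter]
                refine ⟨Finset.mem_univ _, ?_, hxs'⟩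
                have h1 := hsmem.2.1
                rw [Fin.lt_def] at hs'
                omega
              have := Finset.min'_le _ _ hs'mem
              exact absurd hs' (not_lt.mpr this)
            · rw [dif_neg h]
              intro hGood
              apply hnotT x
              refine ⟨?_, hGood⟩
              by_contra hlt
              push_neg at hlt
              refine h ⟨⟨i, hiF⟩, ?_⟩
              rw [Finset.mem_filter]
              exact ⟨Finset.mem_univ _, Nat.le_refl i, hlt⟩
          · intro M hM
            by_contra hno
            push_neg at hno
            have main : ∀ s : Fin (n+1), (s : ℕ) ≤ i → j s ≤ M s := by
              intro s
              induction s using Fin.induction with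
              | zero =>
                intro _
                by_contra hcon
                push_neg at hcon
                have h : (Finset.univ.filter
                    (fun s : Fin (n+1) => (s : ℕ) ≤ i ∧ M 0 < j s)).Nonempty := by
                  refine ⟨0, ?_⟩
                  rw [Finset.mem_filter]
                  exact ⟨Finset.mem_univ _, by simp, hcon⟩
                have hmin0 : Finset.min' _ h = 0 :=
                  le_antisymm (Finset.min'_le _ _ (by
                    rw [Finset.mem_filter]; exact ⟨Finset.mem_univ _, by simp, hcon⟩))
                    (Fin.zero_le _)
                have := hno 0
                rw [dif_pos h, hmin0] at this
                exact this rfl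
              | succ t iht =>
                intro hts
                have htc : ((t.castSucc : Fin (n+1)) : ℕ) ≤ i := by
                  rw [Fin.coe_castSucc]
                  rw [Fin.val_succ] at hts
                  omega
                have hprev : j t.castSucc ≤ M t.castSucc := iht htc
                have hMle : M t.castSucc ≤ M t.succ := hM (Fin.castSucc_le_succ t)
                by_contra hcon
                push_neg at hcon
                have h : (Finset.univ.filter
                    (fun s : Fin (n+1) => (s : ℕ) ≤ i ∧ M t.succ < j s)).Nonempty := by
                  refine ⟨t.succ, ?_⟩
                  rw [Finset.mem_filter]
                  exact ⟨Finset.mem_univ _, hts, hcon⟩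
                have hminval : Finset.min' _ h = t.succ := by
                  refine le_antisymm (Finset.min'_le _ _ (by
                    rw [Finset.mem_filter]; exact ⟨Finset.mem_univ _, hts, hcon⟩)) ?_
                  by_contra hlt
                  push_neg at hlt
                  have hmem := Finset.min'_mem _ h
                  rw [Finset.mem_filter] at hmem
                  have hle : Finset.min' _ h ≤ t.castSucc := by
                    rw [Fin.le_def, Fin.coe_castSucc]
                    rw [Fin.lt_def, Fin.val_succ] at hlt
                    omega
                  have : j (Finset.min' _ h) ≤ M t.succ :=
                    le_trans (le_trans (hjmono hle) hprev) hMle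
                  exact absurd hmem.2.2 (not_lt.mpr this)
                have := hno t.succ
                rw [dif_pos h, hminval] at this
                exact this rfl
            have hfin : j ⟨i, hiF⟩ ≤ M ⟨i+1, hiF1⟩ := by
              refine le_trans (main ⟨i, hiF⟩ (Nat.le_refl i)) (hM ?_)
              rw [Fin.le_def]
              exact Nat.le_succ i
            have hempty : ¬ (Finset.univ.filter
                (fun s : Fin (n+1) => (s : ℕ) ≤ i ∧ M ⟨i+1, hiF1⟩ < j s)).Nonempty := by
              rintro ⟨s0, hs0⟩
              rw [Finset.mem_filter] at hs0
              have hle : s0 ≤ ⟨i, hiF⟩ := by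
                rw [Fin.le_def]
                exact hs0.2.1
              have : j s0 ≤ M ⟨i+1, hiF1⟩ := le_trans (hjmono hle) hfin
              exact absurd hs0.2.2 (not_lt.mpr this)
            have := hno ⟨i+1, hiF1⟩
            rw [dif_neg hempty] at this
            exact this rfl
        -- extend j
        have hymem := Finset.min'_mem _ hT
        rw [Finset.mem_filter] at hymem
        refine ⟨fun s => if (s : ℕ) ≤ i then j s else Finset.min' _ hT, ?_, ?_, ?_⟩
        · intro s s' hss'
          dsimp only
          rw [Fin.le_def] at hss'
          by_cases h1 : (s : ℕ) ≤ i <;> by_cases h2 : (s' : ℕ) ≤ i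
          · rw [if_pos h1, if_pos h2]
            exact hjmono (by rw [Fin.le_def]; omega)
          · rw [if_pos h1, if_neg h2]
            refine le_trans (hjmono (show s ≤ ⟨i, hiF⟩ by
              rw [Fin.le_def]; show (s : ℕ) ≤ i; omega)) hymem.2.1
          · omega
          · rw [if_neg h1, if_neg h2]
        · intro s hs
          dsimp only
          by_cases h1 : (s : ℕ) ≤ i
          · rw [if_pos h1]
            exact hjgood s h1
          · rw [if_neg h1]
            have hs1 : s = ⟨i+1, hiF1⟩ := by
              rw [Fin.ext_iff]; show (s : ℕ) = i + 1; omega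
            rw [hs1]
            exact hymem.2.2
        · intro s hs x hx hbelow
          dsimp only at hx hbelow
          by_cases h1 : (s : ℕ) ≤ i
          · rw [if_pos h1] at hx
            refine hjmin s h1 x hx ?_
            intro s' hs'
            have := hbelow s' hs'
            rw [Fin.lt_def] at hs'
            rwa [if_pos (show (s' : ℕ) ≤ i by omega)] at this
          · rw [if_neg h1] at hx
            have hs1 : s = ⟨i+1, hiF1⟩ := by
              rw [Fin.ext_iff]; show (s : ℕ) = i + 1; omega
            rw [hs1]
            intro hGood
            have hjx : j ⟨i, hiF⟩ ≤ x := by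
              have := hbelow ⟨i, hiF⟩ (by rw [hs1, Fin.lt_def]; exact Nat.lt_succ_self i)
              rwa [if_pos (Nat.le_refl i)] at this
            have hle : Finset.min' _ hT ≤ x := by
              refine Finset.min'_le _ x ?_
              rw [Finset.mem_filter]
              exact ⟨Finset.mem_univ _, hjx, hGood⟩
            exact absurd hx (not_lt.mpr hle)
    obtain ⟨j, hjmono, hjgood, -⟩ := key n le_rfl
    exact ⟨j, hjmono, fun s => hjgood s (Fin.is_le s)⟩
  · -- backward
    rintro ⟨j, hjmono, hjsub⟩ b hb
    refine Fc_le_of_monotone hδ j hjmono (fun i => ?_)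
    have h1 := hjsub i (hb (j i))
    rw [mem_closedBall] at h1
    rwa [dist_comm]
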